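/- For reals x₂ > x₁ ≥ 0, y ≥ 0, and fixed β > 0, γ > 0, L ≥ 0, S > 0, G > 0, the function x ↦ (∫₀^G ∫_{LS}^∞ y^β v^γ e^{-v(x+y+1)/2} dv dy)/(∫_{LS}^∞ v^γ e^{-v(x+G+1)/2} dv) is non-increasing on [0,∞), provided G > 0 so the integrands are positive. -/

import Mathlib

open MeasureTheory Set

namespace Stmt13Aux

noncomputable def II (a γ c : ℝ) : ℝ := ∫ v in Ioi a, v ^ γ * Real.exp (-v * c / 2)

lemma II_integrable {a γ c : ℝ} (ha : 0 ≤ a) (hγ : -1 < γ) (hc : 0 < c) :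
    IntegrableOn (fun v : ℝ => v ^ γ * Real.exp (-v * c / 2)) (Ioi a) := by
  have h0 : IntegrableOn (fun v : ℝ => v ^ γ * Real.exp (-(c / 2) * v ^ (1 : ℝ))) (Ioi 0) :=
    integrableOn_rpow_mul_exp_neg_mul_rpow hγ (by norm_num) (by positivity)
  have h1 : IntegrableOn (fun v : ℝ => v ^ γ * Real.exp (-v * c / 2)) (Ioi 0) := by
    refine h0.congr_fun (fun v _ => ?_) measurableSet_Ioi
    beta_reduce; rw [Real.rpow_one]; ring_nf
  exact h1.mono_set (Ioi_subset_Ioi ha)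

lemma II_nonneg (a γ c : ℝ) (ha : 0 ≤ a) : 0 ≤ II a γ c := by
  refine setIntegral_nonneg measurableSet_Ioi fun v hv => ?_
  have : (0:ℝ) < v := lt_of_le_of_lt ha hv
  positivity

lemma II_pos {a γ c : ℝ} (ha : 0 ≤ a) (hγ : -1 < γ) (hc : 0 < c) : 0 < II a γ c := by
  refine (setIntegral_pos_iff_support_of_nonneg_ae ?_ (II_integrable ha hγ hc)).2 ?_
  · filter_upwards [ae_restrict_mem measurableSet_Ioi] with v hv
    have : (0:ℝ) < v := lt_of_le_of_lt ha hv
    positivity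
  · have hsub : Ioi a ⊆
        Function.support (fun v : ℝ => v ^ γ * Real.exp (-v * c / 2)) ∩ Ioi a := by
      intro v hv
      have hv0 : (0:ℝ) < v := lt_of_le_of_lt ha hv
      refine ⟨?_, hv⟩
      simp only [Function.mem_support]
      positivity
    refine lt_of_lt_of_le ?_ (measure_mono hsub)
    rw [Real.volume_Ioi]
    exact ENNReal.zero_lt_top

lemma II_antitone {a γ c₁ c₂ : ℝ} (ha : 0 ≤ a) (hγ : -1 < γ) (hc₁ : 0 < c₁) (h : c₁ ≤ c₂) :
    II a γ c₂ ≤ II a γ c₁ := by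
  refine setIntegral_mono_on (II_integrable ha hγ (lt_of_lt_of_le hc₁ h))
    (II_integrable ha hγ hc₁) measurableSet_Ioi fun v hv => ?_
  have hv0 : (0:ℝ) < v := lt_of_le_of_lt ha hv
  have : -v * c₂ / 2 ≤ -v * c₁ / 2 := by nlinarith
  exact mul_le_mul_of_nonneg_left (Real.exp_le_exp.2 this) (by positivity)

lemma key {a γ c₁ c₂ t : ℝ} (ha : 0 ≤ a) (hγ : -1 < γ) (h1 : 0 < c₁) (h12 : c₁ ≤ c₂)
    (ht : 0 ≤ t) :
    II a γ (c₁ + t) * II a γ c₂ ≤ II a γ c₁ * II a γ (c₂ + t) := by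
  set μ := volume.restrict (Ioi a) with hμ
  set f : ℝ → ℝ → ℝ := fun c v => v ^ γ * Real.exp (-v * c / 2) with hf
  have h2 : 0 < c₂ := lt_of_lt_of_le h1 h12
  have i1 : Integrable (f c₁) μ := II_integrable ha hγ h1
  have i2 : Integrable (f c₂) μ := II_integrable ha hγ h2
  have i1t : Integrable (f (c₁ + t)) μ := II_integrable ha hγ (by linarith)
  have i2t : Integrable (f (c₂ + t)) μ := II_integrable ha hγ (by linarith)
  set H : ℝ × ℝ → ℝ := fun z => f c₁ z.1 * f (c₂ + t) z.2 - f (c₁ + t) z.1 * f c₂ z.2 with hH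
  set H' : ℝ × ℝ → ℝ := fun z => f c₁ z.2 * f (c₂ + t) z.1 - f (c₁ + t) z.2 * f c₂ z.1 with hH'
  have hHint : Integrable H (μ.prod μ) := (i1.mul_prod i2t).sub (i1t.mul_prod i2)
  have hH'int : Integrable H' (μ.prod μ) := by
    have : Integrable (fun z : ℝ × ℝ => f (c₂ + t) z.1 * f c₁ z.2) (μ.prod μ) :=
      i2t.mul_prod i1
    have h2' : Integrable (fun z : ℝ × ℝ => f c₂ z.1 * f (c₁ + t) z.2) (μ.prod μ) :=
      i2.mul_prod i1t
    refine (this.sub h2').congr (Filter.Eventually.of_forall fun z => ?_)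
    simp only [H', Pi.sub_apply]; ring
  have hIH : ∫ z, H z ∂(μ.prod μ) =
      II a γ c₁ * II a γ (c₂ + t) - II a γ (c₁ + t) * II a γ c₂ := by
    rw [integral_sub (i1.mul_prod i2t) (i1t.mul_prod i2), integral_prod_mul, integral_prod_mul]
    rfl
  have hswap : ∫ z, H' z ∂(μ.prod μ) = ∫ z, H z ∂(μ.prod μ) := by
    have := integral_prod_swap (μ := μ) (ν := μ) H
    rw [← this]
    rfl
  have hsum : 0 ≤ ∫ z, (H z + H' z) ∂(μ.prod μ) := by
    rw [hμ, Measure.prod_restrict] at *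
    refine integral_nonneg_of_ae ?_
    filter_upwards [ae_restrict_mem (measurableSet_Ioi.prod measurableSet_Ioi)] with z hz
    obtain ⟨hu, hv⟩ := hz
    set u := z.1; set v := z.2
    have hu0 : (0:ℝ) < u := lt_of_le_of_lt ha hu
    have hv0 : (0:ℝ) < v := lt_of_le_of_lt ha hv
    have eexp : ∀ w c : ℝ, Real.exp (-w * (c + t) / 2) =
        Real.exp (-w * c / 2) * Real.exp (-w * t / 2) := by
      intro w c; rw [← Real.exp_add]; ring_nf
    have factored : H z + H' z = (u ^ γ * v ^ γ) *
        ((Real.exp (-v * t / 2) - Real.exp (-u * t / 2)) *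
          (Real.exp (-u * c₁ / 2) * Real.exp (-v * c₂ / 2) -
           Real.exp (-v * c₁ / 2) * Real.exp (-u * c₂ / 2))) := by
      simp only [H, H', hf, eexp]
      ring
    rw [factored]
    have hrp : (0:ℝ) ≤ u ^ γ * v ^ γ := by positivity
    refine mul_nonneg hrp ?_
    rcases le_total u v with huv | huv
    · have e1 : Real.exp (-v * t / 2) ≤ Real.exp (-u * t / 2) :=
        Real.exp_le_exp.2 (by nlinarith)
      have e2 : Real.exp (-u * c₁ / 2) * Real.exp (-v * c₂ / 2) ≤
          Real.exp (-v * c₁ / 2) * Real.exp (-u * c₂ / 2) := by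
        rw [← Real.exp_add, ← Real.exp_add]
        refine Real.exp_le_exp.2 ?_
        nlinarith
      exact mul_nonneg_iff.mpr (Or.inr ⟨by linarith, by linarith⟩)
    · have e1 : Real.exp (-u * t / 2) ≤ Real.exp (-v * t / 2) :=
        Real.exp_le_exp.2 (by nlinarith)
      have e2 : Real.exp (-v * c₁ / 2) * Real.exp (-u * c₂ / 2) ≤
          Real.exp (-u * c₁ / 2) * Real.exp (-v * c₂ / 2) := by
        rw [← Real.exp_add, ← Real.exp_add]
        refine Real.exp_le_exp.2 ?_
        nlinarith
      exact mul_nonneg (by linarith) (by linarith)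
  have : 0 ≤ ∫ z, H z ∂(μ.prod μ) := by
    have hsplit : ∫ z, (H z + H' z) ∂(μ.prod μ) =
        (∫ z, H z ∂(μ.prod μ)) + ∫ z, H' z ∂(μ.prod μ) := integral_add hHint hH'int
    rw [hsplit, hswap] at hsum
    linarith
  rw [hIH] at this
  linarith

end Stmt13Aux

open Stmt13Aux

theorem stmt_13 (β γ L S G : ℝ) (hβ : 0 < β) (hγ : 0 < γ) (hL : 0 ≤ L)
    (hS : 0 < S) (hG : 0 < G) :
    AntitoneOn (fun x : ℝ =>
      (∫ y in (0:ℝ)..G, ∫ v in Ioi (L * S), y ^ β * v ^ γ *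
          Real.exp (-v * (x + y + 1) / 2)) /
      (∫ v in Ioi (L * S), v ^ γ * Real.exp (-v * (x + G + 1) / 2)))
      (Ici 0) := by
  set a := L * S with haa
  have ha : 0 ≤ a := mul_nonneg hL hS.le
  have hγ' : (-1:ℝ) < γ := by linarith
  -- rewrite the function
  have hrw : ∀ x : ℝ, (∫ y in (0:ℝ)..G, ∫ v in Ioi a, y ^ β * v ^ γ *
          Real.exp (-v * (x + y + 1) / 2)) =
      ∫ y in (0:ℝ)..G, y ^ β * II a γ (x + y + 1) := by
    intro x
    refine intervalIntegral.integral_congr fun y _ => ?_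
    simp only [mul_assoc]
    rw [MeasureTheory.integral_const_mul]
    rfl
  -- interval integrability
  have hII : ∀ x C : ℝ, 0 ≤ x → 0 ≤ C →
      IntervalIntegrable (fun y => y ^ β * II a γ (x + y + 1) * C) volume 0 G := by
    intro x C hx hC
    rw [intervalIntegrable_iff_integrableOn_Ioc_of_le hG.le]
    have hmeas : AEMeasurable (fun y => y ^ β * II a γ (x + y + 1) * C)
        (volume.restrict (Ioc 0 G)) := by
      have h1 : AEMeasurable (fun y => II a γ (x + y + 1)) (volume.restrict (Ioc 0 G)) := by
        refine aemeasurable_restrict_of_antitoneOn measurableSet_Ioc ?_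
        intro y₁ hy₁ y₂ _ h12
        exact II_antitone ha hγ' (by linarith [hy₁.1]) (by linarith)
      exact (((Real.continuous_rpow_const hβ.le).measurable.aemeasurable.mul h1).mul_const C)
    refine Integrable.mono' (g := fun _ => G ^ β * II a γ 1 * C)
      (integrable_const _) hmeas.aestronglyMeasurable ?_
    filter_upwards [ae_restrict_mem measurableSet_Ioc] with y hy
    have hy0 : (0:ℝ) < y := hy.1
    have h1 : y ^ β ≤ G ^ β := Real.rpow_le_rpow hy0.le hy.2 hβ.le
    have h2 : II a γ (x + y + 1) ≤ II a γ 1 := II_antitone ha hγ' one_pos (by linarith)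
    have h3 : (0:ℝ) ≤ II a γ (x + y + 1) := II_nonneg _ _ _ ha
    have h4 : (0:ℝ) ≤ y ^ β := by positivity
    rw [Real.norm_eq_abs, abs_of_nonneg (by positivity)]
    have : y ^ β * II a γ (x + y + 1) ≤ G ^ β * II a γ 1 :=
      mul_le_mul h1 h2 h3 (by positivity)
    exact mul_le_mul_of_nonneg_right this hC
  intro x₁ hx₁ x₂ hx₂ h12
  simp only [← haa, hrw]
  have hx₁0 : (0:ℝ) ≤ x₁ := hx₁
  have hx₂0 : (0:ℝ) ≤ x₂ := hx₂
  have hD₁ : 0 < II a γ (x₁ + G + 1) := II_pos ha hγ' (by linarith)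
  have hD₂ : 0 < II a γ (x₂ + G + 1) := II_pos ha hγ' (by linarith)
  have hDs : (∫ v in Ioi a, v ^ γ * Real.exp (-v * (x₁ + G + 1) / 2)) = II a γ (x₁ + G + 1) := rfl
  have hDs2 : (∫ v in Ioi a, v ^ γ * Real.exp (-v * (x₂ + G + 1) / 2)) = II a γ (x₂ + G + 1) := rfl
  rw [hDs, hDs2, div_le_div_iff₀ hD₂ hD₁]
  rw [← intervalIntegral.integral_mul_const, ← intervalIntegral.integral_mul_const]
  refine intervalIntegral.integral_mono_on hG.le (hII x₂ _ hx₂0 hD₁.le) (hII x₁ _ hx₁0 hD₂.le)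
    fun y hy => ?_
  have hy0 : (0:ℝ) ≤ y := hy.1
  have hkey : II a γ ((x₁ + y + 1) + (x₂ - x₁)) * II a γ (x₁ + G + 1) ≤
      II a γ (x₁ + y + 1) * II a γ ((x₁ + G + 1) + (x₂ - x₁)) :=
    key ha hγ' (by linarith) (by linarith [hy.2]) (by linarith)
  have e1 : (x₁ + y + 1) + (x₂ - x₁) = x₂ + y + 1 := by ring
  have e2 : (x₁ + G + 1) + (x₂ - x₁) = x₂ + G + 1 := by ring
  rw [e1, e2] at hkey
  calc y ^ β * II a γ (x₂ + y + 1) * II a γ (x₁ + G + 1)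
      = y ^ β * (II a γ (x₂ + y + 1) * II a γ (x₁ + G + 1)) := by ring
    _ ≤ y ^ β * (II a γ (x₁ + y + 1) * II a γ (x₂ + G + 1)) :=
        mul_le_mul_of_nonneg_left hkey (by positivity)
    _ = y ^ β * II a γ (x₁ + y + 1) * II a γ (x₂ + G + 1) := by ring
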